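/- Let R = k[x,y]_{(x,y)} with maximal ideal m, I_n = (x^n) and J_n = (x^{n+1}, x^n y). Then for all n ≥ 1: J_n ⊆ I_n, J_n : m^∞ = (x^n), and λ_R((J_n : m^∞)/J_n) = 1. Consequently ε({J_n}) = lim 2·λ_R((J_n:m^∞)/J_n)/n^2 = 0 = ε({I_n}). -/

import Mathlib

set_option synthInstance.maxHeartbeats 1000000
set_option maxHeartbeats 2000000

open MvPolynomial

noncomputable abbrev mxy (k : Type*) [Field k] : Ideal (MvPolynomial (Fin 2) k) :=
  Ideal.span {X 0, X 1}

noncomputable abbrev Rxy (k : Type*) [Field k] [(mxy k).IsPrime] : Type _ :=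
  Localization.AtPrime (mxy k)

noncomputable abbrev xx (k : Type*) [Field k] [(mxy k).IsPrime] : Rxy k :=
  algebraMap (MvPolynomial (Fin 2) k) (Rxy k) (X 0)

noncomputable abbrev yy (k : Type*) [Field k] [(mxy k).IsPrime] : Rxy k :=
  algebraMap (MvPolynomial (Fin 2) k) (Rxy k) (X 1)

/-- The saturation `I : J^∞ = ⋃ₖ (I : Jᵏ)`. -/
noncomputable def sat {A : Type*} [CommRing A] (I J : Ideal A) : Ideal A :=
  ⨆ n : ℕ, Submodule.colon I ((J ^ n : Ideal A) : Set A)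

/-- The quotient module `S/I` of two ideals (with `I ⊆ S` in the intended use). -/
noncomputable abbrev idealQuot {A : Type*} [CommRing A] (S I : Ideal A) :=
  S ⧸ (Submodule.comap S.subtype I)

/-- The length of a module, expressed as the Krull dimension of its submodule lattice. -/
noncomputable def mlength (R M : Type*) [CommRing R] [AddCommGroup M] [Module R M] : ℕ∞ :=
  WithBot.unbotD 0 (Order.krullDim (Submodule R M))

lemma mlength_eq_zero (R M : Type*) [CommRing R] [AddCommGroup M] [Module R M]
    [Subsingleton M] : mlength R M = 0 := by
  have h1 : Order.krullDim (Submodule R M) ≤ 0 := Order.krullDim_nonpos_of_subsingleton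
  have h2 : 0 ≤ Order.krullDim (Submodule R M) := Order.krullDim_nonneg
  rw [mlength, le_antisymm h1 h2]
  rfl

lemma mlength_eq_one (R M : Type*) [CommRing R] [AddCommGroup M] [Module R M]
    [IsSimpleModule R M] : mlength R M = 1 := by
  have hso : IsSimpleOrder (Submodule R M) := inferInstance
  have hbt : (⊥ : Submodule R M) < ⊤ := bot_lt_top
  have hle : Order.krullDim (Submodule R M) ≤ 1 := by
    refine iSup_le fun p => ?_
    by_contra hc
    push_neg at hc
    have h2 : 2 ≤ p.length := by
      have := hc
      rcases Nat.lt_or_ge p.length 2 with h | h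
      · interval_cases hl : p.length <;> simp_all <;> norm_num at hc
      · exact h
    have h01 : p.toFun ⟨0, by omega⟩ < p.toFun ⟨1, by omega⟩ := by
      have := p.strictMono (show (⟨0, by omega⟩ : Fin (p.length + 1)) < ⟨1, by omega⟩ by
        simp [Fin.lt_def])
      exact this
    have h12 : p.toFun ⟨1, by omega⟩ < p.toFun ⟨2, by omega⟩ := by
      exact p.strictMono (show (⟨1, by omega⟩ : Fin (p.length + 1)) < ⟨2, by omega⟩ by
        simp [Fin.lt_def])
    rcases hso.eq_bot_or_eq_top (p.toFun ⟨1, by omega⟩) with h | h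
    · exact absurd (h ▸ h01) (by simp)
    · exact absurd (h ▸ h12) (by simp)
  have hge : 1 ≤ Order.krullDim (Submodule R M) := by
    let p : LTSeries (Submodule R M) :=
      ⟨1, ![⊥, ⊤], by
        intro i
        fin_cases i
        simpa using hbt⟩
    have := Order.LTSeries.length_le_krullDim p
    simpa using this
  rw [mlength, le_antisymm hle hge]
  rfl

section aux
variable (k : Type*) [Field k] [(mxy k).IsPrime]

lemma compl_le_nzd : (mxy k).primeCompl ≤ nonZeroDivisors (MvPolynomial (Fin 2) k) := by
  intro s hs
  refine mem_nonZeroDivisors_of_ne_zero fun h => hs ?_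
  simp only [h]
  exact Ideal.zero_mem _

lemma inj_alg : Function.Injective (algebraMap (MvPolynomial (Fin 2) k) (Rxy k)) :=
  IsLocalization.injective _ (compl_le_nzd k)

instance : IsDomain (Rxy k) := IsLocalization.isDomain_localization (compl_le_nzd k)

omit [(mxy k).IsPrime] in
lemma prime_X0 : Prime (X 0 : MvPolynomial (Fin 2) k) := by
  refine (MulEquiv.prime_iff (MvPolynomial.finSuccEquiv k 1)).mp ?_
  show Prime ((MvPolynomial.finSuccEquiv k 1) (X 0))
  rw [finSuccEquiv_X_zero]
  exact Polynomial.prime_X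

lemma X0_not_dvd (s : MvPolynomial (Fin 2) k) (hs : s ∈ (mxy k).primeCompl) (j : ℕ) :
    ¬ (X 0 : MvPolynomial (Fin 2) k) ∣ X 1 ^ j * s := by
  intro h
  rcases (prime_X0 k).dvd_mul.mp h with h | h
  · have := (prime_X0 k).dvd_of_dvd_pow h
    rw [X_dvd_X] at this
    exact absurd this (by decide)

  · exact hs (Ideal.span_mono (Set.singleton_subset_iff.mpr (Set.mem_insert _ _))
      (Ideal.mem_span_singleton.mpr h))

lemma xx_ne_zero : xx k ≠ 0 := by
  intro h
  have := inj_alg k (h.trans (map_zero _).symm)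
  exact MvPolynomial.X_ne_zero _ this

/-- key cancellation lemma -/
lemma key (n j : ℕ) (a : Rxy k) (h : xx k ^ n ∣ a * yy k ^ j) : xx k ^ n ∣ a := by
  set f := algebraMap (MvPolynomial (Fin 2) k) (Rxy k) with hf
  have hmem : a * yy k ^ j ∈ Ideal.map f (Ideal.span {X 0 ^ n}) := by
    rw [Ideal.map_span, Set.image_singleton, Ideal.mem_span_singleton, map_pow]
    exact h
  rw [IsLocalization.mem_map_algebraMap_iff (mxy k).primeCompl] at hmem
  obtain ⟨⟨⟨p, hp⟩, s⟩, hps⟩ := hmem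
  obtain ⟨⟨q, t⟩, hqt⟩ := IsLocalization.surj (mxy k).primeCompl a
  simp only [] at hps hqt
  rw [Ideal.mem_span_singleton] at hp
  have heq : f (q * (X 1 ^ j * (s : MvPolynomial (Fin 2) k)))
      = f (p * (t : MvPolynomial (Fin 2) k)) := by
    rw [map_mul, map_mul, map_mul, map_pow]
    calc f q * (f (X 1) ^ j * f (s : MvPolynomial (Fin 2) k))
        = (a * f (t : MvPolynomial (Fin 2) k)) * (yy k ^ j * f (s : MvPolynomial (Fin 2) k)) := by
          rw [hqt]
      _ = ((a * yy k ^ j) * f (s : MvPolynomial (Fin 2) k)) * f (t : MvPolynomial (Fin 2) k) := by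
          ring
      _ = f p * f (t : MvPolynomial (Fin 2) k) := by rw [hps]
  have heq2 : q * (X 1 ^ j * (s : MvPolynomial (Fin 2) k)) = p * (t : MvPolynomial (Fin 2) k) := inj_alg k heq
  have hdvd : (X 0 : MvPolynomial (Fin 2) k) ^ n ∣ q * (X 1 ^ j * (s : MvPolynomial (Fin 2) k)) := by
    rw [heq2]; exact hp.mul_right _
  have hq : (X 0 : MvPolynomial (Fin 2) k) ^ n ∣ q :=
    (prime_X0 k).pow_dvd_of_dvd_mul_right n (X0_not_dvd k s s.2 j) hdvd
  obtain ⟨r, hr⟩ := hq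
  have ht : IsUnit (f (t : MvPolynomial (Fin 2) k)) := IsLocalization.map_units (Rxy k) t
  obtain ⟨u, hu⟩ := ht
  refine ⟨f r * ↑u⁻¹, ?_⟩
  have key1 : a * ↑u = xx k ^ n * f r := by
    rw [hu, hqt, hr, map_mul, map_pow]
  calc a = a * ↑u * ↑u⁻¹ := by rw [mul_assoc, Units.mul_inv, mul_one]
    _ = _ := by rw [key1, mul_assoc]


lemma maxIdeal_eq : IsLocalRing.maximalIdeal (Rxy k) = Ideal.span {xx k, yy k} := by
  rw [← Localization.AtPrime.map_eq_maximalIdeal, Ideal.map_span]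
  congr 1
  rw [Set.image_insert_eq, Set.image_singleton]

lemma memJ (n : ℕ) (r : Rxy k) :
    xx k ^ n * r ∈ Ideal.span {xx k ^ (n+1), xx k ^ n * yy k} ↔
      r ∈ Ideal.span {xx k, yy k} := by
  rw [Ideal.mem_span_pair, Ideal.mem_span_pair]
  constructor
  · rintro ⟨u, v, huv⟩
    refine ⟨u, v, ?_⟩
    have hx : xx k ^ n ≠ 0 := pow_ne_zero _ (xx_ne_zero k)
    apply mul_left_cancel₀ hx
    rw [← huv]; ring
  · rintro ⟨u, v, huv⟩
    exact ⟨u, v, by rw [← huv]; ring⟩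

lemma J_le_I (n : ℕ) :
    Ideal.span {xx k ^ (n+1), xx k ^ n * yy k} ≤ Ideal.span {xx k ^ n} := by
  rw [Ideal.span_le]
  refine Set.insert_subset_iff.mpr ⟨?_, Set.singleton_subset_iff.mpr ?_⟩
  · exact Ideal.mem_span_singleton.mpr (pow_dvd_pow _ (Nat.le_succ n))
  · exact Ideal.mem_span_singleton.mpr (dvd_mul_right _ _)

lemma sat_le (n : ℕ) (K : Ideal (Rxy k)) (hK : K ≤ Ideal.span {xx k ^ n}) :
    sat K (IsLocalRing.maximalIdeal (Rxy k)) ≤ Ideal.span {xx k ^ n} := by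
  refine iSup_le fun j => ?_
  intro a ha
  have hy : yy k ∈ IsLocalRing.maximalIdeal (Rxy k) := by
    rw [maxIdeal_eq]; exact Ideal.subset_span (Set.mem_insert_of_mem _ rfl)
  have hyj : yy k ^ j ∈ (IsLocalRing.maximalIdeal (Rxy k)) ^ j := Ideal.pow_mem_pow hy j
  have hm := Submodule.mem_colon.mp ha _ hyj
  rw [smul_eq_mul] at hm
  exact Ideal.mem_span_singleton.mpr (key k n j a (Ideal.mem_span_singleton.mp (hK hm)))

lemma le_sat (n : ℕ) (K : Ideal (Rxy k))
    (hK : ∀ r ∈ IsLocalRing.maximalIdeal (Rxy k), xx k ^ n * r ∈ K) :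
    Ideal.span {xx k ^ n} ≤ sat K (IsLocalRing.maximalIdeal (Rxy k)) := by
  rw [Ideal.span_le, Set.singleton_subset_iff]
  have hmem : xx k ^ n ∈ Submodule.colon K (((IsLocalRing.maximalIdeal (Rxy k)) ^ 1 : Ideal (Rxy k)) : Set (Rxy k)) := by
    rw [pow_one]
    exact Submodule.mem_colon.mpr fun p hp => by rw [smul_eq_mul]; exact hK p hp
  exact (le_iSup (fun j => Submodule.colon K (((IsLocalRing.maximalIdeal (Rxy k)) ^ j : Ideal (Rxy k)) : Set (Rxy k))) 1) hmem

lemma satJ (n : ℕ) :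
    sat (Ideal.span {xx k ^ (n+1), xx k ^ n * yy k}) (IsLocalRing.maximalIdeal (Rxy k)) =
      Ideal.span {xx k ^ n} := by
  refine le_antisymm (sat_le k n _ (J_le_I k n)) (le_sat k n _ fun r hr => ?_)
  rw [maxIdeal_eq] at hr
  exact (memJ k n r).mpr hr

lemma satI (n : ℕ) :
    sat (Ideal.span {xx k ^ n}) (IsLocalRing.maximalIdeal (Rxy k)) =
      Ideal.span {xx k ^ n} := by
  refine le_antisymm (sat_le k n _ le_rfl) (le_sat k n _ fun r hr => ?_)
  exact Ideal.mem_span_singleton.mpr (Dvd.intro r rfl)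

lemma simpleJ (n : ℕ) (hmemJ : ∀ r : Rxy k, xx k ^ n * r ∈ Ideal.span {xx k ^ (n+1), xx k ^ n * yy k} ↔
      r ∈ IsLocalRing.maximalIdeal (Rxy k)) :
    IsSimpleModule (Rxy k)
      (idealQuot (Ideal.span {xx k ^ n}) (Ideal.span {xx k ^ (n+1), xx k ^ n * yy k})) := by
  rw [isSimpleModule_iff_isCoatom]
  constructor
  · intro htop
    have hv : xx k ^ n ∈ Ideal.span {xx k ^ n} := Ideal.subset_span rfl
    have h1 : (⟨xx k ^ n, hv⟩ : ↥(Ideal.span {xx k ^ n})) ∈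
        Submodule.comap (Ideal.span {xx k ^ n}).subtype
          (Ideal.span {xx k ^ (n+1), xx k ^ n * yy k}) := htop ▸ Submodule.mem_top
    rw [Submodule.mem_comap] at h1
    have h2 : xx k ^ n * 1 ∈ Ideal.span {xx k ^ (n+1), xx k ^ n * yy k} := by
      simpa using h1
    have h3 := (hmemJ 1).mp h2
    exact (IsLocalRing.maximalIdeal.isMaximal (Rxy k)).ne_top
      ((Ideal.eq_top_iff_one _).mpr h3)
  · intro W hW
    obtain ⟨w, hwW, hwN⟩ := SetLike.exists_of_lt hW
    obtain ⟨c, hc⟩ := Ideal.mem_span_singleton'.mp w.2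
    have hcm : c ∉ IsLocalRing.maximalIdeal (Rxy k) := by
      intro h
      apply hwN
      rw [Submodule.mem_comap]
      show (w : Rxy k) ∈ _
      rw [← hc, mul_comm c (xx k ^ n)]
      exact (hmemJ c).mpr h
    have hcu : IsUnit c := by
      by_contra h
      exact hcm (IsLocalRing.mem_maximalIdeal c |>.mpr h)
    rw [eq_top_iff]
    rintro ⟨z, hz⟩ _
    obtain ⟨d, hd⟩ := Ideal.mem_span_singleton'.mp hz
    have heq : (⟨z, hz⟩ : ↥(Ideal.span {xx k ^ n})) = (d * ↑hcu.unit⁻¹) • w := by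
      apply Subtype.ext
      show z = (d * ↑hcu.unit⁻¹) * (w : Rxy k)
      rw [← hc, ← hd]
      have : (↑hcu.unit⁻¹ : Rxy k) * c = 1 := by
        rw [mul_comm]
        exact hcu.mul_val_inv
      calc d * xx k ^ n = d * ((↑hcu.unit⁻¹ * c) * xx k ^ n) := by rw [this, one_mul]
        _ = d * ↑hcu.unit⁻¹ * (c * xx k ^ n) := by ring
    rw [heq]
    exact W.smul_mem _ hwW

end aux

open Filter in
/-- in `R = k[x,y]_{(x,y)}` with `I_n = (xⁿ)`, `J_n = (x^{n+1}, xⁿy)`: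
`J_n ⊆ I_n`, `J_n : m^∞ = (xⁿ)`, `λ_R((J_n : m^∞)/J_n) = 1`, and consequently
`ε({J_n}) = lim 2λ_R((J_n : m^∞)/J_n)/n² = 0 = ε({I_n})`. -/
theorem stmt11 (k : Type*) [Field k] [(mxy k).IsPrime]
    (I J : ℕ → Ideal (Rxy k))
    (hI : ∀ n, 1 ≤ n → I n = Ideal.span {xx k ^ n})
    (hJ : ∀ n, 1 ≤ n → J n = Ideal.span {xx k ^ (n + 1), xx k ^ n * yy k}) :
    (∀ n, 1 ≤ n → J n ≤ I n) ∧
    (∀ n, 1 ≤ n → sat (J n) (IsLocalRing.maximalIdeal (Rxy k)) = Ideal.span {xx k ^ n}) ∧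
    (∀ n, 1 ≤ n →
      mlength (Rxy k)
        (idealQuot (sat (J n) (IsLocalRing.maximalIdeal (Rxy k))) (J n)) = 1) ∧
    Tendsto (fun n : ℕ =>
        (2 * ((mlength (Rxy k)
          (idealQuot (sat (J n) (IsLocalRing.maximalIdeal (Rxy k))) (J n))).toNat : ℝ)) / n ^ 2)
      atTop (nhds 0) ∧
    Tendsto (fun n : ℕ =>
        (2 * ((mlength (Rxy k)
          (idealQuot (sat (I n) (IsLocalRing.maximalIdeal (Rxy k))) (I n))).toNat : ℝ)) / n ^ 2)
      atTop (nhds 0) := by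
  have hmem : ∀ (n : ℕ) (r : Rxy k),
      xx k ^ n * r ∈ Ideal.span {xx k ^ (n+1), xx k ^ n * yy k} ↔
        r ∈ IsLocalRing.maximalIdeal (Rxy k) := fun n r => by
    rw [maxIdeal_eq]; exact memJ k n r
  have h1 : ∀ n, 1 ≤ n → J n ≤ I n := fun n hn => by
    rw [hI n hn, hJ n hn]; exact J_le_I k n
  have h2 : ∀ n, 1 ≤ n →
      sat (J n) (IsLocalRing.maximalIdeal (Rxy k)) = Ideal.span {xx k ^ n} := fun n hn => by
    rw [hJ n hn]; exact satJ k n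
  have h3 : ∀ n, 1 ≤ n →
      mlength (Rxy k)
        (idealQuot (sat (J n) (IsLocalRing.maximalIdeal (Rxy k))) (J n)) = 1 := fun n hn => by
    rw [hJ n hn, satJ k n]
    have := simpleJ k n (hmem n)
    exact mlength_eq_one _ _
  have h5len : ∀ n, 1 ≤ n →
      mlength (Rxy k)
        (idealQuot (sat (I n) (IsLocalRing.maximalIdeal (Rxy k))) (I n)) = 0 := fun n hn => by
    rw [hI n hn, satI k n]
    have : Subsingleton (idealQuot (Ideal.span {xx k ^ n}) (Ideal.span {xx k ^ n})) :=
      Submodule.Quotient.subsingleton_iff.mpr (Submodule.comap_subtype_self _)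
    exact mlength_eq_zero _ _
  have hb : Tendsto (fun n : ℕ => 2 / (n : ℝ) ^ 2) atTop (nhds 0) := by
    apply Filter.Tendsto.div_atTop (tendsto_const_nhds)
    exact (tendsto_pow_atTop (by norm_num : (2:ℕ) ≠ 0)).comp tendsto_natCast_atTop_atTop
  refine ⟨h1, h2, h3, ?_, ?_⟩
  · refine hb.congr' ?_
    filter_upwards [Filter.eventually_ge_atTop 1] with n hn
    rw [h3 n hn]
    norm_num
  · refine (tendsto_const_nhds : Filter.Tendsto (fun _ : ℕ => (0:ℝ)) Filter.atTop (nhds 0)).congr' ?_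
    filter_upwards [Filter.eventually_ge_atTop 1] with n hn
    rw [h5len n hn]
    norm_num
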